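/- Let G be a finite simple graph in which every vertex has positive degree, let λ be an eigenvalue of the normalized Laplacian L, and let v be a unit eigenvector of L with eigenvalue λ. Then the sum of the edge-derivative expressions over all edges of G vanishes: Σ_{{x,y} ∈ E(G)} F(v, λ, {x,y}) = 0, where the sum ranges over the unordered edges of G. -/

import Mathlib

open Finset

variable {V : Type*} [Fintype V] [DecidableEq V]

/-- The normalized Laplacian `L = I - D^{-1/2} A D^{-1/2}` of a simple graph. -/
noncomputable def normLap (G : SimpleGraph V) [DecidableRel G.Adj] : Matrix V V ℝ :=
  fun x y =>
    if x = y then 1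
    else if G.Adj x y then -(1 / Real.sqrt ((G.degree x : ℝ) * (G.degree y : ℝ)))
    else 0

/-- The Aksoy–Purvine–Young edge-derivative expression
`F(v, λ, {x,y}) = (1-λ)(v_x²/d_x + v_y²/d_y) − 2 v_x v_y / √(d_x d_y)`. -/
noncomputable def edgeDeriv (G : SimpleGraph V) [DecidableRel G.Adj]
    (v : V → ℝ) (lam : ℝ) (x y : V) : ℝ :=
  (1 - lam) * (v x ^ 2 / (G.degree x : ℝ) + v y ^ 2 / (G.degree y : ℝ))
    - 2 * (v x * v y) / Real.sqrt ((G.degree x : ℝ) * (G.degree y : ℝ))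

lemma edgeDeriv_symm (G : SimpleGraph V) [DecidableRel G.Adj] (v : V → ℝ) (lam : ℝ) :
    ∀ x y : V, edgeDeriv G v lam x y = edgeDeriv G v lam y x := by
  intro x y
  unfold edgeDeriv
  rw [mul_comm ((G.degree x : ℝ)) ((G.degree y : ℝ))]
  ring

/-- The edge-derivative expression, as a function on unordered pairs. -/
noncomputable def edgeDerivSym (G : SimpleGraph V) [DecidableRel G.Adj]
    (v : V → ℝ) (lam : ℝ) : Sym2 V → ℝ :=
  Sym2.lift ⟨fun x y => edgeDeriv G v lam x y, edgeDeriv_symm G v lam⟩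

/-- Sum over adjacent ordered pairs equals the double sum over neighborhoods. -/
lemma pairSum_eq_double (G : SimpleGraph V) [DecidableRel G.Adj] (f : V → V → ℝ) :
    ∑ p ∈ (univ.filter fun p : V × V => G.Adj p.1 p.2), f p.1 p.2
      = ∑ x, ∑ y ∈ G.neighborFinset x, f x y := by
  rw [Finset.sum_filter, Fintype.sum_prod_type]
  refine Finset.sum_congr rfl fun x _ => ?_
  rw [SimpleGraph.neighborFinset_eq_filter, Finset.sum_filter]

/-- Sum over adjacent ordered pairs is symmetric under swapping. -/
lemma pairSum_swap (G : SimpleGraph V) [DecidableRel G.Adj] (f : V → V → ℝ) :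
    ∑ p ∈ (univ.filter fun p : V × V => G.Adj p.1 p.2), f p.1 p.2
      = ∑ p ∈ (univ.filter fun p : V × V => G.Adj p.1 p.2), f p.2 p.1 := by
  refine Finset.sum_nbij' Prod.swap Prod.swap ?_ ?_ ?_ ?_ ?_ <;>
    simp [SimpleGraph.adj_comm]

/-- Twice the sum over unordered edges equals the sum over adjacent ordered pairs. -/
lemma two_mul_edge_sum (G : SimpleGraph V) [DecidableRel G.Adj] (f : V → V → ℝ)
    (hf : ∀ x y, f x y = f y x) :
    2 * ∑ e ∈ G.edgeFinset, Sym2.lift ⟨f, hf⟩ e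
      = ∑ p ∈ (univ.filter fun p : V × V => G.Adj p.1 p.2), f p.1 p.2 := by
  set s := (univ.filter fun p : V × V => G.Adj p.1 p.2) with hs
  have himg : s.image Sym2.mk.uncurry = G.edgeFinset := by
    ext e
    induction e with
    | _ a b =>
      simp only [Finset.mem_image, SimpleGraph.mem_edgeFinset, SimpleGraph.mem_edgeSet, hs,
        Finset.mem_filter, Finset.mem_univ, true_and]
      constructor
      · rintro ⟨⟨x, y⟩, hxy, he⟩
        rw [Function.uncurry_apply_pair, Sym2.mk_eq_mk_iff (p := (x, y)) (q := (a, b))] at he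
        rcases he with h | h
        · cases h; exact hxy
        · rw [Prod.swap_prod_mk] at h; cases h; exact hxy.symm
      · intro h; exact ⟨(a, b), h, rfl⟩
  have hcalc : ∑ p ∈ s, f p.1 p.2 = ∑ p ∈ s, Sym2.lift ⟨f, hf⟩ (Sym2.mk.uncurry p) := by
    refine Finset.sum_congr rfl fun p _ => ?_
    cases p; simp
  rw [hcalc, Finset.sum_comp (Sym2.lift ⟨f, hf⟩) Sym2.mk.uncurry, himg, Finset.mul_sum]
  refine Finset.sum_congr rfl fun e he => ?_
  induction e with
  | _ a b =>
    have hab : G.Adj a b := by simpa using he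
    have hfib : {p ∈ s | Sym2.mk.uncurry p = s(a, b)} = {(a, b), (b, a)} := by
      ext ⟨x, y⟩
      simp only [Finset.mem_filter, hs, Finset.mem_univ, true_and, Function.uncurry_apply_pair, Sym2.eq_iff, Sym2.mk_eq_mk_iff,
        Finset.mem_insert, Finset.mem_singleton, Prod.mk.injEq, Prod.swap_prod_mk,
        Prod.ext_iff]
      constructor
      · rintro ⟨_, h | h⟩
        · left; exact ⟨h.1, h.2⟩
        · right; exact ⟨h.1, h.2⟩
      · rintro (⟨h1, h2⟩ | ⟨h1, h2⟩) <;> subst h1 <;> subst h2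
        · exact ⟨hab, Or.inl ⟨rfl, rfl⟩⟩
        · exact ⟨hab.symm, Or.inr ⟨rfl, rfl⟩⟩
    rw [hfib]
    have hne : ((a, b) : V × V) ≠ (b, a) := by
      intro h; exact hab.ne (congrArg Prod.fst h)
    rw [Finset.card_insert_of_notMem (by simpa using hne), Finset.card_singleton]
    rw [nsmul_eq_mul]; norm_num

theorem edge_derivative_sum_over_edges_zero
    (G : SimpleGraph V) [DecidableRel G.Adj]
    (hdeg : ∀ z : V, 0 < G.degree z)
    (lam : ℝ) (v : V → ℝ)
    (hunit : ∑ z, v z ^ 2 = 1)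
    (heig : (normLap G).mulVec v = lam • v) :
    ∑ e ∈ G.edgeFinset, edgeDerivSym G v lam e = 0 := by
  have hdeg' : ∀ z : V, ((G.degree z : ℝ)) ≠ 0 := fun z => by
    exact_mod_cast (hdeg z).ne'
  -- eigenvector equation, vertexwise
  have key : ∀ x, ∑ y ∈ G.neighborFinset x,
      v y / Real.sqrt ((G.degree x : ℝ) * (G.degree y : ℝ)) = (1 - lam) * v x := by
    intro x
    have hx : ∑ y, normLap G x y * v y = lam * v x := by
      have := congrFun heig x
      simpa [Matrix.mulVec, dotProduct] using this
    have hsplit : ∑ y, normLap G x y * v y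
        = v x - ∑ y ∈ G.neighborFinset x,
            v y / Real.sqrt ((G.degree x : ℝ) * (G.degree y : ℝ)) := by
      have : ∀ y, normLap G x y * v y
          = (if x = y then v y else 0)
            - (if G.Adj x y then v y / Real.sqrt ((G.degree x : ℝ) * (G.degree y : ℝ)) else 0) := by
        intro y
        unfold normLap
        by_cases h : x = y
        · subst h; simp [G.irrefl]
        · simp only [if_neg h]
          by_cases ha : G.Adj x y <;> simp [ha] <;> ring
      rw [Finset.sum_congr rfl fun y _ => this y, Finset.sum_sub_distrib,
        Finset.sum_ite_eq univ x (fun y => v y), if_pos (Finset.mem_univ x),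
        SimpleGraph.neighborFinset_eq_filter, Finset.sum_filter]
    rw [hsplit] at hx
    linarith
  -- three partial sums
  have h1 : ∑ x, ∑ y ∈ G.neighborFinset x, (1 - lam) * (v x ^ 2 / (G.degree x : ℝ))
      = 1 - lam := by
    have : ∀ x : V, ∑ y ∈ G.neighborFinset x, (1 - lam) * (v x ^ 2 / (G.degree x : ℝ))
        = (1 - lam) * v x ^ 2 := by
      intro x
      rw [Finset.sum_const, G.card_neighborFinset_eq_degree, nsmul_eq_mul]
      field_simp [hdeg' x]
    rw [Finset.sum_congr rfl fun x _ => this x, ← Finset.mul_sum, hunit, mul_one]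
  have h2 : ∑ x, ∑ y ∈ G.neighborFinset x, (1 - lam) * (v y ^ 2 / (G.degree y : ℝ))
      = 1 - lam := by
    rw [← pairSum_eq_double G (fun x y => (1 - lam) * (v y ^ 2 / (G.degree y : ℝ))),
      ← pairSum_swap G (fun x y => (1 - lam) * (v x ^ 2 / (G.degree x : ℝ))),
      pairSum_eq_double G (fun x y => (1 - lam) * (v x ^ 2 / (G.degree x : ℝ)))]
    exact h1
  have h3 : ∑ x, ∑ y ∈ G.neighborFinset x,
      2 * (v x * v y) / Real.sqrt ((G.degree x : ℝ) * (G.degree y : ℝ))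
      = 2 * (1 - lam) := by
    have : ∀ x : V, ∑ y ∈ G.neighborFinset x,
        2 * (v x * v y) / Real.sqrt ((G.degree x : ℝ) * (G.degree y : ℝ))
        = 2 * (1 - lam) * v x ^ 2 := by
      intro x
      have : ∑ y ∈ G.neighborFinset x,
          2 * (v x * v y) / Real.sqrt ((G.degree x : ℝ) * (G.degree y : ℝ))
          = 2 * v x * ∑ y ∈ G.neighborFinset x,
              v y / Real.sqrt ((G.degree x : ℝ) * (G.degree y : ℝ)) := by
        rw [Finset.mul_sum]
        exact Finset.sum_congr rfl fun y _ => by ring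
      rw [this, key x]; ring
    rw [Finset.sum_congr rfl fun x _ => this x, ← Finset.mul_sum, hunit, mul_one]
  -- put it together
  have hmain : 2 * ∑ e ∈ G.edgeFinset, edgeDerivSym G v lam e = 0 := by
    have h2m := two_mul_edge_sum G (fun x y => edgeDeriv G v lam x y) (edgeDeriv_symm G v lam)
    rw [show edgeDerivSym G v lam = Sym2.lift ⟨fun x y => edgeDeriv G v lam x y,
      edgeDeriv_symm G v lam⟩ from rfl, h2m, pairSum_eq_double]
    have hsplitall : ∑ x, ∑ y ∈ G.neighborFinset x, edgeDeriv G v lam x y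
        = (∑ x, ∑ y ∈ G.neighborFinset x, (1 - lam) * (v x ^ 2 / (G.degree x : ℝ)))
          + (∑ x, ∑ y ∈ G.neighborFinset x, (1 - lam) * (v y ^ 2 / (G.degree y : ℝ)))
          - ∑ x, ∑ y ∈ G.neighborFinset x,
              2 * (v x * v y) / Real.sqrt ((G.degree x : ℝ) * (G.degree y : ℝ)) := by
      rw [← Finset.sum_add_distrib, ← Finset.sum_sub_distrib]
      refine Finset.sum_congr rfl fun x _ => ?_
      rw [← Finset.sum_add_distrib, ← Finset.sum_sub_distrib]
      refine Finset.sum_congr rfl fun y _ => ?_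
      unfold edgeDeriv; ring
    rw [hsplitall, h1, h2, h3]; ring
  linarith
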